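/- Let E₈ be the lattice ℤ⁸ with bilinear form b whose Gram matrix on the basis e₁, …, e₈ is the negative of the Cartan matrix of E₈ in Bourbaki numbering (so b(e_i, e_i) = −2 for all i, b(e_i, e_j) = 1 if {i, j} is one of the adjacent pairs {1,3}, {3,4}, {2,4}, {4,5}, {5,6}, {6,7}, {7,8}, and b(e_i, e_j) = 0 otherwise). Then the vector v = 6e₁ + 9e₂ + 12e₃ + 18e₄ + 15e₅ + 12e₆ + 8e₇ + 4e₈ satisfies b(v, v) = −12, and the orthogonal complement {w ∈ E₈ : b(w, v) = 0} is a rank‑7 lattice admitting a ℤ‑basis whose Gram matrix is the orthogonal direct sum of the negated Cartan matrices of A₂ and of D₅. -/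

import Mathlib

/-- The negated Cartan matrix of `E₈` in Bourbaki numbering: `−2` on the diagonal and `1`
for the adjacent pairs `{1,3}, {3,4}, {2,4}, {4,5}, {5,6}, {6,7}, {7,8}` (here 0-based). -/
def gramE8 : Matrix (Fin 8) (Fin 8) ℤ :=
  !![-2,  0,  1,  0,  0,  0,  0,  0;
      0, -2,  0,  1,  0,  0,  0,  0;
      1,  0, -2,  1,  0,  0,  0,  0;
      0,  1,  1, -2,  1,  0,  0,  0;
      0,  0,  0,  1, -2,  1,  0,  0;
      0,  0,  0,  0,  1, -2,  1,  0;
      0,  0,  0,  0,  0,  1, -2,  1;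
      0,  0,  0,  0,  0,  0,  1, -2]

/-- The bilinear form of the `E₈` lattice on `ℤ⁸` (coordinates in the basis `e₁, …, e₈`). -/
def bE8 (v w : Fin 8 → ℤ) : ℤ := ∑ i, ∑ j, v i * gramE8 i j * w j

/-- The orthogonal direct sum of the negated Cartan matrices of `A₂` and `D₅`
(Bourbaki numbering for `D₅`). -/
def gramA2D5 : Matrix (Fin 7) (Fin 7) ℤ :=
  !![-2,  1,  0,  0,  0,  0,  0;
      1, -2,  0,  0,  0,  0,  0;
      0,  0, -2,  1,  0,  0,  0;
      0,  0,  1, -2,  1,  0,  0;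
      0,  0,  0,  1, -2,  1,  1;
      0,  0,  0,  0,  1, -2,  0;
      0,  0,  0,  0,  1,  0, -2]

def sigma7 : Fin 7 → Fin 8 := ![6, 7, 0, 2, 3, 1, 4]

def fAD : Fin 7 → (Fin 8 → ℤ) := fun i => Pi.single (sigma7 i) 1

lemma bE8_single (a b : Fin 8) : bE8 (Pi.single a 1) (Pi.single b 1) = gramE8 a b := by
  simp [bE8, Pi.single_apply]

lemma keyAD (v : Fin 8 → ℤ) (hv : v = ![6, 9, 12, 18, 15, 12, 8, 4]) (w : Fin 8 → ℤ) :
    bE8 w v = -(w 5) := by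
  subst hv
  simp [bE8, gramE8, Fin.sum_univ_succ]
  ring_nf

lemma sig0 : sigma7 0 = 6 := rfl
lemma sig1 : sigma7 1 = 7 := rfl
lemma sig2 : sigma7 2 = 0 := rfl
lemma sig3 : sigma7 3 = 2 := rfl
lemma sig4 : sigma7 4 = 3 := rfl
lemma sig5 : sigma7 5 = 1 := rfl
lemma sig6 : sigma7 6 = 4 := rfl

lemma fAD_li : LinearIndependent ℤ fAD := by
  have h : fAD = (fun i => (Pi.basisFun ℤ (Fin 8)) i) ∘ sigma7 := by
    funext i
    simp [fAD, Pi.basisFun_apply]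
  rw [h]
  exact (Pi.basisFun ℤ (Fin 8)).linearIndependent.comp sigma7 (by decide)

/-- The vector `v = 6e₁ + 9e₂ + 12e₃ + 18e₄ + 15e₅ + 12e₆ + 8e₇ + 4e₈` satisfies
`b(v, v) = −12`, and its orthogonal complement in `E₈` is a rank-7 lattice with a ℤ-basis
whose Gram matrix is the orthogonal direct sum of the negated Cartan matrices of `A₂`
and `D₅` (i.e. the complement is a copy of `A₂ ⊕ D₅`). -/
theorem stmt5 (v : Fin 8 → ℤ) (hv : v = ![6, 9, 12, 18, 15, 12, 8, 4]) :
    bE8 v v = -12 ∧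
    ∃ f : Fin 7 → (Fin 8 → ℤ),
      LinearIndependent ℤ f ∧
      (Submodule.span ℤ (Set.range f) : Set (Fin 8 → ℤ)) = {w | bE8 w v = 0} ∧
      ∀ i j, bE8 (f i) (f j) = gramA2D5 i j := by
  refine ⟨by rw [keyAD v hv v, hv]; rfl, fAD, fAD_li, ?_, ?_⟩
  · ext w
    simp only [SetLike.mem_coe, Set.mem_setOf_eq, keyAD v hv, neg_eq_zero]
    constructor
    · intro hw
      induction hw using Submodule.span_induction with
      | mem x hx =>
        obtain ⟨i, rfl⟩ := hx
        fin_cases i <;> simp [fAD, sig0, sig1, sig2, sig3, sig4, sig5, sig6, Pi.single_apply]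
      | zero => simp
      | add x y _ _ hx hy => simp [hx, hy]
      | smul c x _ hx => simp [hx]
    · intro hw5
      have hrep : w = w 6 • fAD 0 + w 7 • fAD 1 + w 0 • fAD 2 + w 2 • fAD 3 +
          w 3 • fAD 4 + w 1 • fAD 5 + w 4 • fAD 6 := by
        funext j
        fin_cases j <;>
          simp [fAD, sig0, sig1, sig2, sig3, sig4, sig5, sig6, Pi.single_apply, hw5]
      rw [hrep]
      refine Submodule.add_mem _ (Submodule.add_mem _ (Submodule.add_mem _
        (Submodule.add_mem _ (Submodule.add_mem _ (Submodule.add_mem _ ?_ ?_) ?_) ?_) ?_) ?_) ?_ <;>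
        exact Submodule.smul_mem _ _ (Submodule.subset_span ⟨_, rfl⟩)
  · intro i j
    show bE8 (Pi.single (sigma7 i) 1) (Pi.single (sigma7 j) 1) = gramA2D5 i j
    rw [bE8_single]
    fin_cases i <;> fin_cases j <;> rfl
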